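/- Let k be a field of characteristic ≠ 2 and H = (kC₂)* the dual of the group algebra of the cyclic group of order 2. Then the universal partial Hopf algebra H_par is isomorphic as a k-algebra to k[x]/⟨x(2x-1)(x-1)⟩; in particular it is 3-dimensional. -/

import Mathlib

open TensorProduct BigOperators HopfAlgebra

variable (k : Type) [CommRing k] (H : Type) [Ring H] [HopfAlgebra k H]

/-- `sw f g : H → T(H)` is the Sweedler convolution `x ↦ ∑ f(x₍₁₎) * g(x₍₂₎)`. -/
noncomputable def sw (f g : H →ₗ[k] TensorAlgebra k H) : H →ₗ[k] TensorAlgebra k H :=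
  (LinearMap.mul' k (TensorAlgebra k H)) ∘ₗ (TensorProduct.map f g) ∘ₗ
    (Coalgebra.comul (R := k))

/-- The defining relations of the universal partial "Hopf" algebra `H_par`,
imposed on the tensor algebra `T(H)`. -/
inductive HparRel : TensorAlgebra k H → TensorAlgebra k H → Prop
  | one : HparRel (TensorAlgebra.ι k (1 : H)) 1
  | pr2 (h x : H) : HparRel
      (TensorAlgebra.ι k h *
        sw k H (TensorAlgebra.ι k) ((TensorAlgebra.ι k) ∘ₗ antipode (R := k)) x)
      (sw k H ((TensorAlgebra.ι k) ∘ₗ LinearMap.mulLeft k h)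
        ((TensorAlgebra.ι k) ∘ₗ antipode (R := k)) x)
  | pr3 (h x : H) : HparRel
      (sw k H (TensorAlgebra.ι k) ((TensorAlgebra.ι k) ∘ₗ antipode (R := k)) h *
        TensorAlgebra.ι k x)
      (sw k H (TensorAlgebra.ι k)
        ((TensorAlgebra.ι k) ∘ₗ (LinearMap.mulRight k x) ∘ₗ antipode (R := k)) h)
  | pr4 (h x : H) : HparRel
      (TensorAlgebra.ι k h *
        sw k H ((TensorAlgebra.ι k) ∘ₗ antipode (R := k)) (TensorAlgebra.ι k) x)
      (sw k H ((TensorAlgebra.ι k) ∘ₗ (LinearMap.mulLeft k h) ∘ₗ antipode (R := k))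
        (TensorAlgebra.ι k) x)
  | pr5 (h x : H) : HparRel
      (sw k H ((TensorAlgebra.ι k) ∘ₗ antipode (R := k)) (TensorAlgebra.ι k) h *
        TensorAlgebra.ι k x)
      (sw k H ((TensorAlgebra.ι k) ∘ₗ antipode (R := k))
        ((TensorAlgebra.ι k) ∘ₗ LinearMap.mulRight k x) h)

/-- The universal partial "Hopf" algebra `H_par` of a Hopf algebra `H`. -/
abbrev Hpar : Type := RingQuot (HparRel k H)

/-- The canonical (universal) partial representation `h ↦ [h]` of `H` on `H_par`. -/
noncomputable def bracket : H →ₗ[k] Hpar k H :=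
  (RingQuot.mkAlgHom k (HparRel k H)).toLinearMap ∘ₗ TensorAlgebra.ι k

open Polynomial

section
variable {k H} (pe pg : H)

theorem sw_pe (hcomul_e : Coalgebra.comul (R := k) pe = pe ⊗ₜ[k] pe + pg ⊗ₜ[k] pg)
    (u v : H →ₗ[k] TensorAlgebra k H) :
    sw k H u v pe = u pe * v pe + u pg * v pg := by
  simp [sw, hcomul_e, LinearMap.mul'_apply]

theorem sw_pg (hcomul_g : Coalgebra.comul (R := k) pg = pe ⊗ₜ[k] pg + pg ⊗ₜ[k] pe)
    (u v : H →ₗ[k] TensorAlgebra k H) :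
    sw k H u v pg = u pe * v pg + u pg * v pe := by
  simp [sw, hcomul_g, LinearMap.mul'_apply]

theorem mul_ee (hsum : pe + pg = 1) (hprod : pe * pg = 0) : pe * pe = pe := by
  have h : pe * pe + pe * pg = pe := by rw [← mul_add, hsum, mul_one]
  rw [hprod, add_zero] at h; exact h

theorem mul_ge (hsum : pe + pg = 1) (hprod : pe * pg = 0) : pg * pe = 0 := by
  have h : pe * pe + pg * pe = pe := by rw [← add_mul, hsum, one_mul]
  rw [mul_ee pe pg hsum hprod] at h
  exact add_eq_left.mp h

theorem mul_gg (hsum : pe + pg = 1) (hprod : pe * pg = 0) : pg * pg = pg := by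
  have h : pg * pe + pg * pg = pg := by rw [← mul_add, hsum, mul_one]
  rwa [mul_ge pe pg hsum hprod, zero_add] at h

end

noncomputable def qpoly (k : Type) [Field k] : Polynomial k := X * (2*X - 1) * (X - 1)

abbrev Aq (k : Type) [Field k] : Type := Polynomial k ⧸ Ideal.span {qpoly k}

noncomputable def tA (k : Type) [Field k] : Aq k := Ideal.Quotient.mk _ X

theorem tA_cube (k : Type) [Field k] : tA k * (2 * tA k - 1) * (tA k - 1) = 0 := by
  have h : (Ideal.Quotient.mk (Ideal.span {qpoly k})) (qpoly k) = 0 :=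
    Ideal.Quotient.eq_zero_iff_mem.mpr (Ideal.mem_span_singleton_self _)
  rw [show qpoly k = X * (2*X - 1) * (X - 1) from rfl] at h
  simp only [map_mul, map_sub, map_one, map_ofNat] at h
  exact h

section
variable {k : Type} [Field k] {H : Type} [Ring H] [HopfAlgebra k H]
  (b : Module.Basis (Fin 2) k H) (pe pg : H)

noncomputable def f0 : H →ₗ[k] Aq k := b.constr k ![1 - tA k, tA k]

theorem f0_pe (hb0 : b 0 = pe) : f0 b pe = 1 - tA k := by
  rw [← hb0]; simpa [f0] using b.constr_basis k ![1 - tA k, tA k] 0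

theorem f0_pg (hb1 : b 1 = pg) : f0 b pg = tA k := by
  rw [← hb1]; simpa [f0] using b.constr_basis k ![1 - tA k, tA k] 1

noncomputable def phiT : TensorAlgebra k H →ₐ[k] Aq k := TensorAlgebra.lift k (f0 b)

theorem phiT_ι (h : H) : phiT b (TensorAlgebra.ι k h) = f0 b h := by
  simp [phiT]

theorem hdec (hb0 : b 0 = pe) (hb1 : b 1 = pg) (h : H) :
    ∃ c0 c1 : k, h = c0 • pe + c1 • pg := by
  refine ⟨b.repr h 0, b.repr h 1, ?_⟩
  conv_lhs => rw [← b.sum_repr h]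
  rw [Fin.sum_univ_two, hb0, hb1]

end

section
variable {k : Type} [Field k] {H : Type} [Ring H] [HopfAlgebra k H]
  (b : Module.Basis (Fin 2) k H) (pe pg : H)

theorem phiT_rel (hb0 : b 0 = pe) (hb1 : b 1 = pg)
    (hsum : pe + pg = 1) (hprod : pe * pg = 0)
    (hcomul_e : Coalgebra.comul (R := k) pe = pe ⊗ₜ[k] pe + pg ⊗ₜ[k] pg)
    (hcomul_g : Coalgebra.comul (R := k) pg = pe ⊗ₜ[k] pg + pg ⊗ₜ[k] pe)
    (hantipode : antipode (R := k) (A := H) = LinearMap.id) :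
    ∀ x y, HparRel k H x y → phiT b x = phiT b y := by
  have hee := mul_ee pe pg hsum hprod
  have hge := mul_ge pe pg hsum hprod
  have hgg := mul_gg pe pg hsum hprod
  have hf := tA_cube k
  have hfe := f0_pe b pe hb0
  have hfg := f0_pg b pg hb1
  intro x y hrel
  induction hrel with
  | one =>
    rw [← hsum]
    simp only [map_add, phiT_ι, hfe, hfg, map_one]
    ring
  | pr2 h x =>
    obtain ⟨c0, c1, rfl⟩ := hdec b pe pg hb0 hb1 h
    obtain ⟨d0, d1, rfl⟩ := hdec b pe pg hb0 hb1 x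
    rw [hantipode]
    simp only [map_add, map_smul, mul_add, add_mul, smul_mul_assoc, mul_smul_comm,
      LinearMap.comp_id, sw_pe pe pg hcomul_e, sw_pg pe pg hcomul_g]
    simp only [LinearMap.coe_comp, Function.comp_apply, LinearMap.id_coe, id_eq,
      LinearMap.mulLeft_apply, LinearMap.mulRight_apply, add_mul, smul_mul_assoc, hee, hprod, hge, hgg,
      map_add, map_smul, map_zero, smul_zero, zero_add, add_zero, map_mul,
      phiT_ι, hfe, hfg, zero_mul, mul_zero, smul_add, mul_smul_comm, mul_add]
    have hsm : ∀ (c : k) (x : Aq k), c • x = algebraMap k (Aq k) c * x :=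
      fun c x => Algebra.smul_def c x
    simp only [hsm]
    linear_combination (algebraMap k (Aq k) c0 * algebraMap k (Aq k) d1
      + algebraMap k (Aq k) c1 * algebraMap k (Aq k) d0
      - algebraMap k (Aq k) c0 * algebraMap k (Aq k) d0
      - algebraMap k (Aq k) c1 * algebraMap k (Aq k) d1) * hf
  | pr3 h x =>
    obtain ⟨c0, c1, rfl⟩ := hdec b pe pg hb0 hb1 h
    obtain ⟨d0, d1, rfl⟩ := hdec b pe pg hb0 hb1 x
    rw [hantipode]
    simp only [map_add, map_smul, mul_add, add_mul, smul_mul_assoc, mul_smul_comm,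
      LinearMap.comp_id, sw_pe pe pg hcomul_e, sw_pg pe pg hcomul_g]
    simp only [LinearMap.coe_comp, Function.comp_apply, LinearMap.id_coe, id_eq,
      LinearMap.mulLeft_apply, LinearMap.mulRight_apply, add_mul, smul_mul_assoc, hee, hprod, hge, hgg,
      map_add, map_smul, map_zero, smul_zero, zero_add, add_zero, map_mul,
      phiT_ι, hfe, hfg, zero_mul, mul_zero, smul_add, mul_smul_comm, mul_add]
    have hsm : ∀ (c : k) (x : Aq k), c • x = algebraMap k (Aq k) c * x :=
      fun c x => Algebra.smul_def c x
    simp only [hsm]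
    linear_combination (algebraMap k (Aq k) c0 * algebraMap k (Aq k) d1
      + algebraMap k (Aq k) c1 * algebraMap k (Aq k) d0
      - algebraMap k (Aq k) c0 * algebraMap k (Aq k) d0
      - algebraMap k (Aq k) c1 * algebraMap k (Aq k) d1) * hf
  | pr4 h x =>
    obtain ⟨c0, c1, rfl⟩ := hdec b pe pg hb0 hb1 h
    obtain ⟨d0, d1, rfl⟩ := hdec b pe pg hb0 hb1 x
    rw [hantipode]
    simp only [map_add, map_smul, mul_add, add_mul, smul_mul_assoc, mul_smul_comm,
      LinearMap.comp_id, sw_pe pe pg hcomul_e, sw_pg pe pg hcomul_g]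
    simp only [LinearMap.coe_comp, Function.comp_apply, LinearMap.id_coe, id_eq,
      LinearMap.mulLeft_apply, LinearMap.mulRight_apply, add_mul, smul_mul_assoc, hee, hprod, hge, hgg,
      map_add, map_smul, map_zero, smul_zero, zero_add, add_zero, map_mul,
      phiT_ι, hfe, hfg, zero_mul, mul_zero, smul_add, mul_smul_comm, mul_add]
    have hsm : ∀ (c : k) (x : Aq k), c • x = algebraMap k (Aq k) c * x :=
      fun c x => Algebra.smul_def c x
    simp only [hsm]
    linear_combination (algebraMap k (Aq k) c0 * algebraMap k (Aq k) d1
      + algebraMap k (Aq k) c1 * algebraMap k (Aq k) d0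
      - algebraMap k (Aq k) c0 * algebraMap k (Aq k) d0
      - algebraMap k (Aq k) c1 * algebraMap k (Aq k) d1) * hf
  | pr5 h x =>
    obtain ⟨c0, c1, rfl⟩ := hdec b pe pg hb0 hb1 h
    obtain ⟨d0, d1, rfl⟩ := hdec b pe pg hb0 hb1 x
    rw [hantipode]
    simp only [map_add, map_smul, mul_add, add_mul, smul_mul_assoc, mul_smul_comm,
      LinearMap.comp_id, sw_pe pe pg hcomul_e, sw_pg pe pg hcomul_g]
    simp only [LinearMap.coe_comp, Function.comp_apply, LinearMap.id_coe, id_eq,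
      LinearMap.mulLeft_apply, LinearMap.mulRight_apply, add_mul, smul_mul_assoc, hee, hprod, hge, hgg,
      map_add, map_smul, map_zero, smul_zero, zero_add, add_zero, map_mul,
      phiT_ι, hfe, hfg, zero_mul, mul_zero, smul_add, mul_smul_comm, mul_add]
    have hsm : ∀ (c : k) (x : Aq k), c • x = algebraMap k (Aq k) c * x :=
      fun c x => Algebra.smul_def c x
    simp only [hsm]
    linear_combination (algebraMap k (Aq k) c0 * algebraMap k (Aq k) d1
      + algebraMap k (Aq k) c1 * algebraMap k (Aq k) d0
      - algebraMap k (Aq k) c0 * algebraMap k (Aq k) d0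
      - algebraMap k (Aq k) c1 * algebraMap k (Aq k) d1) * hf

end

theorem cube_expand (R : Type) [Ring R] (a : R) :
    a*(2*a-1)*(a-1) = a*((1-a)*(1-a)+a*a) - a*a := by noncomm_ring

theorem Aq_finrank (k : Type) [Field k] (hchar : (2:k) ≠ 0) :
    Module.finrank k (Aq k) = 3 := by
  have hd : (qpoly k).natDegree = 3 := by unfold qpoly; compute_degree!
  have h0 : qpoly k ≠ 0 := by intro h; rw [h] at hd; simp at hd
  have hfr := (AdjoinRoot.powerBasis h0).finrank
  rw [AdjoinRoot.powerBasis_dim] at hfr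
  rw [← hd]; exact hfr


/-- Let `k` be a field with `char k ≠ 2` and let `H = (kC₂)*` be the dual of
the group algebra of the cyclic group of order two: `H` has a basis `{p_e, p_g}` with
`p_e + p_g = 1`, `p_e p_g = 0`, `Δ(p_e) = p_e⊗p_e + p_g⊗p_g`, `Δ(p_g) = p_e⊗p_g + p_g⊗p_e`,
`ε(p_e) = 1`, `ε(p_g) = 0` and `S = id`.  Then `H_par ≅ k[x]/⟨x(2x-1)(x-1)⟩` as
`k`-algebras; in particular `H_par` is 3-dimensional. -/
theorem Hpar_of_dual_C2 (k : Type) [Field k] (hchar : (2 : k) ≠ 0)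
    (H : Type) [Ring H] [HopfAlgebra k H] (pe pg : H)
    (b : Module.Basis (Fin 2) k H) (hb0 : b 0 = pe) (hb1 : b 1 = pg)
    (hsum : pe + pg = 1) (hprod : pe * pg = 0)
    (hcomul_e : Coalgebra.comul (R := k) pe = pe ⊗ₜ[k] pe + pg ⊗ₜ[k] pg)
    (hcomul_g : Coalgebra.comul (R := k) pg = pe ⊗ₜ[k] pg + pg ⊗ₜ[k] pe)
    (hcounit_e : Coalgebra.counit (R := k) (A := H) pe = 1)
    (hcounit_g : Coalgebra.counit (R := k) (A := H) pg = 0)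
    (hantipode : antipode (R := k) (A := H) = LinearMap.id) :
    Nonempty (Hpar k H ≃ₐ[k]
      (Polynomial k ⧸ Ideal.span
        {Polynomial.X * (2 * Polynomial.X - 1 : Polynomial k) * (Polynomial.X - 1 : Polynomial k)})) ∧
    Module.finrank k (Hpar k H) = 3 := by
  classical
  have hee := mul_ee pe pg hsum hprod
  have hge := mul_ge pe pg hsum hprod
  have hgg := mul_gg pe pg hsum hprod
  set mk' := RingQuot.mkAlgHom k (HparRel k H) with hmk'
  obtain ⟨E, hEdef⟩ : ∃ E : Hpar k H, E = mk' (TensorAlgebra.ι k pe) := ⟨_, rfl⟩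
  obtain ⟨G, hGdef⟩ : ∃ G : Hpar k H, G = mk' (TensorAlgebra.ι k pg) := ⟨_, rfl⟩
  -- the forward map
  have hrel := phiT_rel b pe pg hb0 hb1 hsum hprod hcomul_e hcomul_g hantipode
  let Φ : Hpar k H →ₐ[k] Aq k :=
    RingQuot.liftAlgHom k ⟨phiT b, fun x y h => hrel x y h⟩
  have hΦmk : ∀ z, Φ (mk' z) = phiT b z := fun z =>
    RingQuot.liftAlgHom_mkAlgHom_apply k (phiT b) _ z
  -- E + G = 1
  have hEG : E + G = 1 := by
    have h1 : mk' (TensorAlgebra.ι k (1 : H)) = mk' 1 :=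
      RingQuot.mkAlgHom_rel k (HparRel.one)
    have h1' : mk' (TensorAlgebra.ι k (1 : H)) = 1 := by rw [h1, map_one]
    rw [hEdef, hGdef, ← map_add, ← map_add, hsum, h1']
  have hEeq : E = 1 - G := eq_sub_of_add_eq hEG
  -- the cubic relation for G
  have hGrel : G * (E * E + G * G) = G * G := by
    have h2 := RingQuot.mkAlgHom_rel k (HparRel.pr2 (k := k) (H := H) pg pe)
    rw [hantipode] at h2
    simp only [LinearMap.comp_id, sw_pe pe pg hcomul_e, map_mul, map_add,
      LinearMap.coe_comp, Function.comp_apply, LinearMap.mulLeft_apply,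
      hge, hgg, map_zero, zero_mul, zero_add] at h2
    rw [hEdef, hGdef]
    exact h2
  have hcube : G * (2 * G - 1) * (G - 1) = 0 := by
    rw [cube_expand _ G, ← hEeq, hGrel, sub_self]
  -- the backward map
  have haq : (Polynomial.aeval G) (qpoly k) = 0 := by
    rw [show qpoly k = Polynomial.X * (2*Polynomial.X - 1) * (Polynomial.X - 1) from rfl]
    simp only [map_mul, map_sub, map_one, map_ofNat, Polynomial.aeval_X]
    exact hcube
  let Ψ : Aq k →ₐ[k] Hpar k H :=
    Ideal.Quotient.liftₐ _ (Polynomial.aeval G) (by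
      intro a ha
      rw [Ideal.mem_span_singleton] at ha
      obtain ⟨cc, rfl⟩ := ha
      rw [map_mul, haq, zero_mul])
  have hΨt : Ψ (tA k) = G := by
    show Ideal.Quotient.liftₐ _ _ _ (Ideal.Quotient.mk _ Polynomial.X) = G
    rw [Ideal.Quotient.liftₐ_apply]
    exact Polynomial.aeval_X (R := k) G
  have h1 : Φ.comp Ψ = AlgHom.id k (Aq k) := by
    apply Ideal.Quotient.algHom_ext
    apply Polynomial.algHom_ext
    have hX : (Ideal.Quotient.mkₐ k (Ideal.span {qpoly k})) Polynomial.X = tA k := rfl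
    simp only [AlgHom.comp_apply, hX, hΨt, AlgHom.id_apply]
    rw [hGdef, hΦmk, phiT_ι, f0_pg b pg hb1]
  have h2 : Ψ.comp Φ = AlgHom.id k (Hpar k H) := by
    apply RingQuot.ringQuot_ext'
    apply TensorAlgebra.hom_ext
    apply b.ext
    intro i
    fin_cases i
    · simp only [LinearMap.coe_comp, Function.comp_apply, AlgHom.toLinearMap_apply,
        AlgHom.comp_apply, AlgHom.id_apply, Fin.mk_zero, Fin.mk_one, hb0]
      rw [hΦmk, phiT_ι, f0_pe b pe hb0, map_sub, map_one, hΨt, ← hEdef, hEeq]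
    · simp only [LinearMap.coe_comp, Function.comp_apply, AlgHom.toLinearMap_apply,
        AlgHom.comp_apply, AlgHom.id_apply, Fin.mk_zero, Fin.mk_one, hb1]
      rw [hΦmk, phiT_ι, f0_pg b pg hb1, hΨt, ← hGdef]
  exact ⟨⟨AlgEquiv.ofAlgHom Φ Ψ h1 h2⟩, by
    have hfr := (AlgEquiv.ofAlgHom Φ Ψ h1 h2).toLinearEquiv.finrank_eq
    rw [hfr]; exact Aq_finrank k hchar⟩
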